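/- Let A > 0, M ≥ 0, and let x : [t₀, T] → ℝ be a continuous, positive, differentiable function with x(t₀) ≤ M and x'(t) ≤ A·max(M, sup_{s ∈ [t₀, t]} x(s)) for all t ∈ [t₀, T]. Then x(t) ≤ M·e^{A(t - t₀)} for all t ∈ [t₀, T]. -/

import Mathlib

open Set

theorem stmt_9 (A M t₀ T : ℝ) (hA : 0 < A) (hM : 0 ≤ M) (x x' : ℝ → ℝ)
    (hcont : ContinuousOn x (Set.Icc t₀ T))
    (hpos : ∀ t ∈ Set.Icc t₀ T, 0 < x t)
    (hx0 : x t₀ ≤ M)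
    (hderiv : ∀ t ∈ Set.Icc t₀ T, HasDerivAt x (x' t) t)
    (hineq : ∀ t ∈ Set.Icc t₀ T, x' t ≤ A * max M (sSup (x '' Set.Icc t₀ t))) :
    ∀ t ∈ Set.Icc t₀ T, x t ≤ M * Real.exp (A * (t - t₀)) := by
  intro t ht
  have hexp_pos : 0 < Real.exp (A * (t - t₀)) := Real.exp_pos _
  have key : ∀ ε > 0, x t ≤ (M + ε) * Real.exp (A * (t - t₀)) := by
    intro ε hε
    set h : ℝ → ℝ := fun s => (M + ε) * Real.exp (A * (s - t₀)) with hh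
    have hderivh : ∀ s : ℝ, HasDerivAt h (A * h s) s := by
      intro s
      have h1 : HasDerivAt (fun s : ℝ => A * (s - t₀)) A s := by
        simpa using ((hasDerivAt_id s).sub_const t₀).const_mul A
      have h2 := (h1.exp).const_mul (M + ε)
      rw [show A * h s = (M + ε) * (Real.exp (A * (s - t₀)) * A) by simp only [hh]; ring]
      exact h2
    have hcont_h : Continuous h := by
      apply Continuous.mul continuous_const
      exact Real.continuous_exp.comp (continuous_const.mul (continuous_id.sub continuous_const))
    by_contra hbad
    push_neg at hbad
    set B : Set ℝ := Icc t₀ T ∩ (fun s => x s - h s) ⁻¹' Ici 0 with hB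
    have hBne : B.Nonempty := ⟨t, ht, by simp only [mem_preimage, mem_Ici, sub_nonneg, hh]; linarith⟩
    have hBclosed : IsClosed B := by
      apply ContinuousOn.preimage_isClosed_of_isClosed ?_ isClosed_Icc isClosed_Ici
      exact hcont.sub hcont_h.continuousOn
    have hBbdd : BddBelow B := ⟨t₀, fun s hs => hs.1.1⟩
    set c := sInf B with hc
    have hcB : c ∈ B := hBclosed.csInf_mem hBne hBbdd
    have hcIcc : c ∈ Icc t₀ T := hcB.1
    have hlt : ∀ s ∈ Icc t₀ T, s < c → x s < h s := by
      intro s hs hsc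
      by_contra hxs
      push_neg at hxs
      have : s ∈ B := ⟨hs, by simp only [mem_preimage, mem_Ici, sub_nonneg]; exact hxs⟩
      exact absurd (csInf_le hBbdd this) (not_le.mpr hsc)
    -- f = h - x is monotone on [t₀, c]
    set f : ℝ → ℝ := fun s => h s - x s with hf
    have hmono : MonotoneOn f (Icc t₀ c) := by
      have hsub : Icc t₀ c ⊆ Icc t₀ T := Icc_subset_Icc_right hcIcc.2
      apply monotoneOn_of_deriv_nonneg (convex_Icc t₀ c)
      · exact (hcont_h.continuousOn.sub (hcont.mono hsub))
      · intro s hs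
        rw [interior_Icc] at hs
        have hsIcc : s ∈ Icc t₀ T := ⟨le_of_lt hs.1, le_trans (le_of_lt hs.2) hcIcc.2⟩
        exact ((hderivh s).sub (hderiv s hsIcc)).differentiableAt.differentiableWithinAt
      · intro s hs
        rw [interior_Icc] at hs
        have hsIcc : s ∈ Icc t₀ T := ⟨le_of_lt hs.1, le_trans (le_of_lt hs.2) hcIcc.2⟩
        have hd : HasDerivAt f (A * h s - x' s) s := (hderivh s).sub (hderiv s hsIcc)
        rw [hd.deriv]
        have hmax : max M (sSup (x '' Icc t₀ s)) ≤ h s := by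
          have hexp1 : 1 ≤ Real.exp (A * (s - t₀)) := by
            apply Real.one_le_exp
            have : t₀ ≤ s := le_of_lt hs.1
            nlinarith
          have hMh : M ≤ h s := by
            have : M + ε ≤ (M + ε) * Real.exp (A * (s - t₀)) := by nlinarith
            simp only [hh]; linarith
          have hsup : sSup (x '' Icc t₀ s) ≤ h s := by
            apply csSup_le
            · exact (nonempty_Icc.mpr (le_of_lt hs.1)).image x
            · rintro y ⟨u, hu, rfl⟩
              have huIcc : u ∈ Icc t₀ T := ⟨hu.1, le_trans hu.2 (le_trans (le_of_lt hs.2) hcIcc.2)⟩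
              have hux : x u < h u := hlt u huIcc (lt_of_le_of_lt hu.2 hs.2)
              have hhu : h u ≤ h s := by
                simp only [hh]
                have : Real.exp (A * (u - t₀)) ≤ Real.exp (A * (s - t₀)) := by
                  apply Real.exp_le_exp.mpr
                  nlinarith [hu.2, hs.2]
                nlinarith
              linarith
          exact max_le hMh hsup
        have := hineq s hsIcc
        nlinarith [mul_le_mul_of_nonneg_left hmax (le_of_lt hA)]
    have ht₀mem : t₀ ∈ Icc t₀ c := ⟨le_refl _, hcIcc.1⟩
    have hcmem : c ∈ Icc t₀ c := ⟨hcIcc.1, le_refl _⟩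
    have h1 : f t₀ ≤ f c := hmono ht₀mem hcmem hcIcc.1
    have h2 : ε ≤ f t₀ := by
      simp only [hf, hh, sub_self, mul_zero, Real.exp_zero, mul_one]
      linarith
    have h3 : f c ≤ 0 := by
      have := hcB.2
      simp only [mem_preimage, mem_Ici, sub_nonneg] at this
      simp only [hf]; linarith
    linarith
  apply le_of_forall_pos_le_add
  intro ε hε
  have h1 := key (ε / Real.exp (A * (t - t₀))) (div_pos hε hexp_pos)
  have : (M + ε / Real.exp (A * (t - t₀))) * Real.exp (A * (t - t₀))
      = M * Real.exp (A * (t - t₀)) + ε := by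
    field_simp
  linarith [h1.trans_eq this]
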